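/- Let p be a positive integer, let ρ ∈ ℂ with 0 < |ρ| < 1, and let (t_n)_{n ≥ 1} be a sequence in ℂ that converges to a p-cycle: there exist τ_0, …, τ_{p−1} ∈ ℂ such that t_n − τ_{(n−1) mod p} → 0 as n → ∞. Let (x_n)_{n ≥ 0} be defined by x_{n+1} = ρ x_n + t_{n+1} (x_0 ∈ ℂ arbitrary), and define ξ_i = (1/(1 − ρ^p))·Σ_{j=0}^{p−1} ρ^{p−j−1} τ_{(i+j) mod p} for i = 0, …, p−1. Then x_n − ξ_{n mod p} → 0 as n → ∞; that is, (x_n) converges to the p-cycle {ξ_0, …, ξ_{p−1}}. -/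

import Mathlib

open Finset Filter

lemma aux_contraction (ρ : ℂ) (hρ1 : ‖ρ‖ < 1) (e s : ℕ → ℂ)
    (he : ∀ n, e (n + 1) = ρ * e n + s n)
    (hs : Tendsto s atTop (nhds 0)) :
    Tendsto e atTop (nhds 0) := by
  set r := ‖ρ‖ with hr
  have hr0 : 0 ≤ r := norm_nonneg ρ
  have h1r : 0 < 1 - r := by linarith
  rw [NormedAddCommGroup.tendsto_nhds_zero] at hs ⊢
  intro ε hε
  set δ := ε * (1 - r) / 2 with hδdef
  have hδ : 0 < δ := by positivity
  obtain ⟨N, hN⟩ := (hs δ hδ).exists_forall_of_atTop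
  have key : ∀ k, ‖e (N + k)‖ ≤ r ^ k * ‖e N‖ + δ / (1 - r) := by
    intro k
    induction k with
    | zero =>
      simp only [pow_zero, one_mul, Nat.add_zero]
      have : 0 ≤ δ / (1 - r) := by positivity
      linarith
    | succ k ih =>
      have h1 : ‖e (N + (k + 1))‖ ≤ r * ‖e (N + k)‖ + ‖s (N + k)‖ := by
        have : e (N + (k + 1)) = ρ * e (N + k) + s (N + k) := by
          rw [← he (N + k)]; ring_nf
        rw [this]
        calc ‖ρ * e (N + k) + s (N + k)‖ ≤ ‖ρ * e (N + k)‖ + ‖s (N + k)‖ :=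
              norm_add_le _ _
          _ = r * ‖e (N + k)‖ + ‖s (N + k)‖ := by
              rw [norm_mul]
      have h2 : ‖s (N + k)‖ ≤ δ := le_of_lt (hN (N + k) (by omega))
      have h3 : r * ‖e (N + k)‖ ≤ r * (r ^ k * ‖e N‖ + δ / (1 - r)) :=
        mul_le_mul_of_nonneg_left ih hr0
      have h4 : r * δ / (1 - r) + δ = δ / (1 - r) := by
        field_simp
        ring
      have : r * (r ^ k * ‖e N‖ + δ / (1 - r)) = r ^ (k + 1) * ‖e N‖ + r * δ / (1 - r) := by
        ring
      rw [this] at h3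
      linarith
  have hpow : Tendsto (fun k : ℕ => r ^ k * ‖e N‖) atTop (nhds 0) := by
    have := tendsto_pow_atTop_nhds_zero_of_lt_one hr0 hρ1
    simpa using this.mul_const ‖e N‖
  have hεhalf : 0 < ε / 2 := by positivity
  obtain ⟨K, hK⟩ := (Metric.tendsto_atTop.mp hpow (ε / 2) hεhalf)
  rw [eventually_atTop]
  refine ⟨N + K, fun n hn => ?_⟩
  obtain ⟨k, rfl⟩ : ∃ k, n = N + k := ⟨n - N, by omega⟩
  have hk : K ≤ k := by omega
  have h5 : r ^ k * ‖e N‖ < ε / 2 := by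
    have := hK k hk
    rw [Real.dist_eq, sub_zero] at this
    have habs : |r ^ k * ‖e N‖| = r ^ k * ‖e N‖ := by
      apply abs_of_nonneg; positivity
    rwa [habs] at this
  have h6 : δ / (1 - r) = ε / 2 := by
    rw [hδdef]; field_simp
  calc ‖e (N + k)‖ ≤ r ^ k * ‖e N‖ + δ / (1 - r) := key k
    _ < ε / 2 + ε / 2 := by rw [h6]; linarith
    _ = ε := by ring

/-- let `0 < |ρ| < 1` and let `t` converge to the `p`-cycle
`τ_0,…,τ_{p-1}` in the sense that `t_n - τ_{(n-1) mod p} → 0`. If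
`x_{n+1} = ρ x_n + t_{n+1}` and
`ξ_i = (1/(1-ρ^p)) ∑_{j=0}^{p-1} ρ^(p-j-1) τ_{(i+j) mod p}`, then
`x_n - ξ_{n mod p} → 0`, i.e. `x` converges to the `p`-cycle `ξ_0,…,ξ_{p-1}`. -/
theorem statement15 (p : ℕ) (hp : 0 < p) (ρ : ℂ)
    (hρ0 : 0 < ‖ρ‖) (hρ1 : ‖ρ‖ < 1)
    (t : ℕ → ℂ) (τ : ℕ → ℂ)
    (hconv : Tendsto (fun n : ℕ => t n - τ ((n - 1) % p)) atTop (nhds 0))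
    (x : ℕ → ℂ) (hx : ∀ n : ℕ, x (n + 1) = ρ * x n + t (n + 1))
    (ξ : ℕ → ℂ)
    (hξ : ∀ i : ℕ, ξ i = (1 / (1 - ρ ^ p)) * ∑ j ∈ range p, ρ ^ (p - j - 1) * τ ((i + j) % p)) :
    Tendsto (fun n : ℕ => x n - ξ (n % p)) atTop (nhds 0) := by
  have hr0 : (0:ℝ) ≤ ‖ρ‖ := norm_nonneg ρ
  have hne : (1 : ℂ) - ρ ^ p ≠ 0 := by
    intro h
    have h1 : ρ ^ p = 1 := by linear_combination -h
    have : ‖ρ ^ p‖ < 1 := by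
      rw [norm_pow]
      exact pow_lt_one₀ hr0 hρ1 hp.ne'
    rw [h1] at this
    simp at this
  -- ξ depends only on the residue
  have hmod : ∀ n : ℕ, ξ (n % p) = ξ n := by
    intro n
    rw [hξ, hξ]
    congr 1
    apply Finset.sum_congr rfl
    intro j _
    rw [Nat.mod_add_mod]
  -- the key recurrence for ξ
  have hrec : ∀ i : ℕ, ξ (i + 1) = ρ * ξ i + τ (i % p) := by
    intro i
    obtain ⟨q, rfl⟩ : ∃ q, p = q + 1 := ⟨p - 1, by omega⟩
    have key : ∑ j ∈ range (q + 1), ρ ^ (q + 1 - j - 1) * τ ((i + 1 + j) % (q + 1))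
        = ρ * ∑ j ∈ range (q + 1), ρ ^ (q + 1 - j - 1) * τ ((i + j) % (q + 1))
          + (1 - ρ ^ (q + 1)) * τ (i % (q + 1)) := by
      rw [Finset.sum_range_succ, Finset.sum_range_succ' (fun j => ρ ^ (q + 1 - j - 1) * τ ((i + j) % (q + 1))) q]
      have h1 : (i + 1 + q) % (q + 1) = i % (q + 1) := by
        have : i + 1 + q = i + (q + 1) := by ring
        rw [this, Nat.add_mod_right]
      have h2 : q + 1 - q - 1 = 0 := by omega
      rw [h1, h2, pow_zero, one_mul, mul_add, Finset.mul_sum]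
      have h3 : ∀ j ∈ range q, ρ * (ρ ^ (q + 1 - (j + 1) - 1) * τ ((i + (j + 1)) % (q + 1)))
          = ρ ^ (q + 1 - j - 1) * τ ((i + 1 + j) % (q + 1)) := by
        intro j hj
        rw [mem_range] at hj
        have e1 : q + 1 - j - 1 = (q + 1 - (j + 1) - 1) + 1 := by omega
        have e2 : i + (j + 1) = i + 1 + j := by omega
        rw [e2, e1, pow_succ]
        ring
      rw [Finset.sum_congr rfl h3]
      have h4 : q + 1 - 0 - 1 = q := by omega
      rw [h4]
      have h5 : (i + 0) % (q + 1) = i % (q + 1) := by rw [Nat.add_zero]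
      rw [h5]
      ring
    rw [hξ, hξ, key]
    field_simp
  -- the error sequence
  have hscv : Tendsto (fun n : ℕ => t (n + 1) - τ (n % p)) atTop (nhds 0) := by
    have := hconv.comp (tendsto_add_atTop_nat 1)
    simpa [Function.comp_def] using this
  apply aux_contraction ρ hρ1 _ _ _ hscv
  intro n
  rw [hmod, hmod, hx n, hrec n]
  ring
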